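/- Let A : Ω_A → L(H) be a discrete POVM (Ω_A countable with power-set σ-algebra, A(x) ≥ 0, ∑_x A(x) = I) and T : Ω_A → Ω_T a map to a measurable space whose σ-algebra contains singletons. Suppose there exist h : Ω_A → [0,∞) and g : S(H) × Ω_T → [0,∞) with tr[ρ A(x)] = h(x)·g_ρ(T(x)) for all states ρ and all x ∈ Ω_A, where ρ ↦ g_ρ(t) is affine and positive. Then there exists a positive-operator-valued function G : Ω_T → L₊(H) such that A(x) = h(x)·G(T(x)) for all x ∈ Ω_A. -/

import Mathlib

open MeasureTheory
open scoped InnerProductSpace ENNReal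

/-- A positive-operator valued measure on outcome space `Ω` over the Hilbert space `H`.
σ-additivity in the weak operator topology is encoded by the family of scalar measures
`E ↦ ⟪x, A(E) x⟫` attached to each vector `x`. -/
structure POVM (Ω : Type*) [MeasurableSpace Ω] (H : Type*) [NormedAddCommGroup H]
    [InnerProductSpace ℂ H] [CompleteSpace H] where
  toFun : Set Ω → H →L[ℂ] H
  pos : ∀ E, MeasurableSet E → (toFun E).IsPositive
  map_univ : toFun Set.univ = 1
  measure : H → MeasureTheory.Measure Ω
  measure_apply : ∀ (x : H) (E : Set Ω), MeasurableSet E →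
    measure x E = ENNReal.ofReal (⟪x, toFun E x⟫_ℂ).re

variable {H : Type*} [NormedAddCommGroup H] [InnerProductSpace ℂ H] [CompleteSpace H]

/-- A state (positive trace-class operator of unit trace), with trace computed
in the Hilbert basis `b` of the separable Hilbert space `H`. -/
structure QState (b : HilbertBasis ℕ ℂ H) where
  op : H →L[ℂ] H
  pos : op.IsPositive
  tr_one : HasSum (fun i => (⟪b i, op (b i)⟫_ℂ).re) 1

/-- The trace of an operator `T`, computed in the Hilbert basis `b`. -/
noncomputable def trOp (b : HilbertBasis ℕ ℂ H) (T : H →L[ℂ] H) : ℝ :=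
  ∑' i, (⟪b i, T (b i)⟫_ℂ).re

section Helpers
set_option linter.unusedSectionVars false

noncomputable def rkOne (e : H) : H →L[ℂ] H := (innerSL ℂ e).smulRight e

lemma rkOne_apply (e x : H) : rkOne e x = ⟪e, x⟫_ℂ • e := rfl

lemma rkOne_symm (e : H) : (rkOne e : H →ₗ[ℂ] H).IsSymmetric := by
  intro x y
  simp only [ContinuousLinearMap.coe_coe, rkOne_apply, inner_smul_left, inner_smul_right,
    ← inner_conj_symm e x, Complex.conj_conj]
  ring

lemma rkOne_pos (e : H) : (rkOne e).IsPositive := by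
  refine ⟨rkOne_symm e, fun x => ?_⟩
  rw [ContinuousLinearMap.reApplyInnerSelf_apply, rkOne_apply, inner_smul_left]
  have : (starRingEnd ℂ) ⟪e, x⟫_ℂ * ⟪e, x⟫_ℂ = (Complex.normSq ⟪e, x⟫_ℂ : ℂ) := by
    rw [mul_comm, Complex.mul_conj]
  rw [this]
  simp [Complex.normSq_nonneg]

lemma hasSum_tr_rkOne (b : HilbertBasis ℕ ℂ H) (e : H) (S : H →L[ℂ] H)
    (hS : IsSelfAdjoint S) :
    HasSum (fun i => (⟪b i, (rkOne e ∘L S) (b i)⟫_ℂ).re) (⟪e, S e⟫_ℂ).re := by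
  have h1 := (b.hasSum_inner_mul_inner (S e) e).mapL Complex.reCLM
  have h2 : ∀ i : ℕ, (⟪b i, (rkOne e ∘L S) (b i)⟫_ℂ).re
      = Complex.reCLM (⟪S e, b i⟫_ℂ * ⟪b i, e⟫_ℂ) := by
    intro i
    have hsym : ⟪S e, b i⟫_ℂ = ⟪e, S (b i)⟫_ℂ := hS.isSymmetric e (b i)
    simp only [ContinuousLinearMap.comp_apply, rkOne_apply, inner_smul_right, hsym,
      Complex.reCLM_apply]
  have h3 : (⟪e, S e⟫_ℂ).re = Complex.reCLM ⟪S e, e⟫_ℂ := by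
    rw [Complex.reCLM_apply, ← inner_conj_symm (S e) e, Complex.conj_re]
  rw [h3]
  exact h1.congr_fun fun i => h2 i

lemma re_inner_zero_all (S : H →L[ℂ] H)
    (h0 : ∀ e : H, ‖e‖ = 1 → (⟪e, S e⟫_ℂ).re = 0) (x : H) : (⟪x, S x⟫_ℂ).re = 0 := by
  rcases eq_or_ne x 0 with rfl | hx
  · simp
  · have he := h0 (((‖x‖ : ℂ))⁻¹ • x) (norm_smul_inv_norm hx)
    rw [_root_.map_smul, inner_smul_left, inner_smul_right, ← Complex.ofReal_inv, Complex.conj_ofReal,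
      ← mul_assoc, ← Complex.ofReal_mul, Complex.re_ofReal_mul] at he
    have hn : ‖x‖⁻¹ * ‖x‖⁻¹ ≠ 0 := by
      have := norm_ne_zero_iff.mpr hx
      positivity
    exact (mul_eq_zero.mp he).resolve_left hn

lemma sa_eq_zero (D : H →L[ℂ] H) (hD : IsSelfAdjoint D)
    (h0 : ∀ x : H, (⟪x, D x⟫_ℂ).re = 0) : D = 0 := by
  have key : ∀ x : H, ⟪(D : H →ₗ[ℂ] H) x, x⟫_ℂ = 0 := by
    intro x
    have h1 : ⟪D x, x⟫_ℂ = ⟪x, D x⟫_ℂ := hD.isSymmetric x x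
    have h2 : (starRingEnd ℂ) ⟪x, D x⟫_ℂ = ⟪D x, x⟫_ℂ := inner_conj_symm (D x) x
    have him : (⟪x, D x⟫_ℂ).im = 0 :=
      Complex.conj_eq_iff_im.mp (by rw [h2, h1])
    show ⟪D x, x⟫_ℂ = 0
    rw [h1, Complex.ext_iff]
    exact ⟨by simpa using h0 x, by simpa using him⟩
  have hz := (inner_map_self_eq_zero (D : H →ₗ[ℂ] H)).mp key
  ext x
  simpa using LinearMap.congr_fun hz x

lemma smul_isPositive {S : H →L[ℂ] H} (hS : S.IsPositive) {c : ℝ} (hc : 0 ≤ c) :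
    ((c : ℂ) • S).IsPositive := by
  have h1 : IsSelfAdjoint ((c : ℂ) • S) := by
    rw [isSelfAdjoint_iff, star_smul, hS.isSelfAdjoint.star_eq, Complex.star_def,
      Complex.conj_ofReal]
  refine ⟨h1.isSymmetric, fun x => ?_⟩
  rw [ContinuousLinearMap.reApplyInnerSelf_apply, ContinuousLinearMap.smul_apply,
    inner_smul_left, Complex.conj_ofReal]
  show 0 ≤ ((c : ℂ) * ⟪S x, x⟫_ℂ).re
  rw [Complex.re_ofReal_mul]
  exact mul_nonneg hc (hS.re_inner_nonneg_left x)


noncomputable def pureSt (b : HilbertBasis ℕ ℂ H) (e : H) (he : ‖e‖ = 1) : QState b where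
  op := rkOne e
  pos := rkOne_pos e
  tr_one := by
    have h1 := hasSum_tr_rkOne b e 1 (IsSelfAdjoint.one (H →L[ℂ] H))
    have h2 : (⟪e, (1 : H →L[ℂ] H) e⟫_ℂ).re = 1 := by
      simp only [ContinuousLinearMap.one_apply]
      have := inner_self_eq_norm_sq (𝕜 := ℂ) e
      rw [he] at this
      simpa using this
    rw [h2] at h1
    exact h1.congr_fun fun i => by
      simp only [ContinuousLinearMap.comp_apply, ContinuousLinearMap.one_apply]

lemma trOp_pure (b : HilbertBasis ℕ ℂ H) (e : H) (he : ‖e‖ = 1) (S : H →L[ℂ] H)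
    (hS : IsSelfAdjoint S) :
    trOp b ((pureSt b e he).op ∘L S) = (⟪e, S e⟫_ℂ).re :=
  (hasSum_tr_rkOne b e S hS).tsum_eq

end Helpers

/-- For a discrete POVM `A` on a countable outcome set, if
`tr[ρ A(x)] = h(x) g_ρ(T(x))` for all states `ρ` with `ρ ↦ g_ρ(t)` affine and
nonnegative, then `A(x) = h(x) G(T(x))` for some positive-operator valued `G`. -/
theorem stmt15 {ΩA ΩT : Type*} [Countable ΩA] [MeasurableSpace ΩT]
    (b : HilbertBasis ℕ ℂ H)
    (A : ΩA → H →L[ℂ] H) (hpos : ∀ a, (A a).IsPositive)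
    (hcomp : ∀ x : H, HasSum (fun a => ⟪x, A a x⟫_ℂ) ⟪x, x⟫_ℂ)
    (hsing : ∀ t : ΩT, MeasurableSet {t})
    (T : ΩA → ΩT)
    (h : ΩA → ℝ) (hh : ∀ a, 0 ≤ h a)
    (g : QState b → ΩT → ℝ) (hg : ∀ ρ t, 0 ≤ g ρ t)
    (hfac : ∀ (ρ : QState b) (a : ΩA), trOp b (ρ.op ∘L A a) = h a * g ρ (T a))
    (haff : ∀ (t : ΩT) (ρ₁ ρ₂ ρ₃ : QState b) (p : ℝ), 0 ≤ p → p ≤ 1 →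
      ρ₃.op = (p : ℂ) • ρ₁.op + ((1 - p : ℝ) : ℂ) • ρ₂.op →
      g ρ₃ t = p * g ρ₁ t + (1 - p) * g ρ₂ t) :
    ∃ G : ΩT → H →L[ℂ] H, (∀ t, (G t).IsPositive) ∧
      ∀ a : ΩA, A a = (h a : ℂ) • G (T a) := by
  classical
  have key : ∀ (e : H) (he : ‖e‖ = 1) (a : ΩA),
      (⟪e, A a e⟫_ℂ).re = h a * g (pureSt b e he) (T a) := by
    intro e he a
    rw [← trOp_pure b e he (A a) (hpos a).isSelfAdjoint, hfac]
  have zeroA : ∀ a : ΩA, h a = 0 → A a = 0 := by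
    intro a ha
    refine sa_eq_zero _ (hpos a).isSelfAdjoint (re_inner_zero_all _ fun e he => ?_)
    rw [key e he a, ha, zero_mul]
  have prop : ∀ a a' : ΩA, T a' = T a → (h a' : ℂ) • A a = (h a : ℂ) • A a' := by
    intro a a' hT
    have hD : IsSelfAdjoint ((h a' : ℂ) • A a - (h a : ℂ) • A a') := by
      apply IsSelfAdjoint.sub
      · rw [isSelfAdjoint_iff, star_smul, (hpos a).isSelfAdjoint.star_eq, Complex.star_def,
          Complex.conj_ofReal]
      · rw [isSelfAdjoint_iff, star_smul, (hpos a').isSelfAdjoint.star_eq, Complex.star_def,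
          Complex.conj_ofReal]
    have hre : ∀ e : H, ‖e‖ = 1 → (⟪e, ((h a' : ℂ) • A a - (h a : ℂ) • A a') e⟫_ℂ).re = 0 := by
      intro e he
      have k1 := key e he a
      have k2 := key e he a'
      rw [← hT] at k1
      simp only [ContinuousLinearMap.sub_apply, ContinuousLinearMap.smul_apply,
        inner_sub_right, inner_smul_right, Complex.sub_re]
      have r1 : ((h a' : ℂ) * ⟪e, A a e⟫_ℂ).re = h a' * (⟪e, A a e⟫_ℂ).re :=
        Complex.re_ofReal_mul _ _
      have r2 : ((h a : ℂ) * ⟪e, A a' e⟫_ℂ).re = h a * (⟪e, A a' e⟫_ℂ).re :=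
        Complex.re_ofReal_mul _ _
      rw [r1, r2, k1, k2]
      ring
    have hz := sa_eq_zero _ hD (re_inner_zero_all _ hre)
    exact sub_eq_zero.mp hz
  refine ⟨fun t => if hex : ∃ a, T a = t ∧ h a ≠ 0
      then (((h hex.choose)⁻¹ : ℝ) : ℂ) • A hex.choose else 0, fun t => ?_, fun a => ?_⟩
  · dsimp only
    split_ifs with hex
    · exact smul_isPositive (hpos _) (inv_nonneg.mpr (hh _))
    · exact ContinuousLinearMap.isPositive_zero
  · by_cases ha : h a = 0
    · simp [zeroA a ha, ha]
    · have hex : ∃ a', T a' = T a ∧ h a' ≠ 0 := ⟨a, rfl, ha⟩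
      dsimp only
      rw [dif_pos hex]
      obtain ⟨hT', hh'⟩ := hex.choose_spec
      set a' := hex.choose
      have hp := prop a a' hT'
      have hne : (h a' : ℂ) ≠ 0 := by exact_mod_cast hh'
      have : ((h a' : ℂ))⁻¹ • ((h a' : ℂ) • A a) = ((h a' : ℂ))⁻¹ • ((h a : ℂ) • A a') := by
        rw [hp]
      rw [smul_smul, smul_smul, inv_mul_cancel₀ hne, one_smul] at this
      rw [this, smul_smul]
      congr 1
      push_cast
      ring
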